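/- Let c : ℕ → ℍ with Σ_n |c_n|² < ∞ and let I ∈ 𝕊. Then for every 0 ≤ r < 1, (1/2π) ∫₀^{2π} |F_c(r e^{It})|² dt = Σ_n r^{2n} |c_n|², and consequently sup_{0 ≤ r < 1} (1/2π) ∫₀^{2π} |F_c(r e^{It})|² dt = Σ_n |c_n|². -/

import Mathlib

noncomputable section

local notation "ℍ" => Quaternion ℝ

/-- The power series function `F_c(q) = Σ_n q^n c_n` associated to a coefficient
sequence `c : ℕ → ℍ`. -/
def Fc (c : ℕ → ℍ) (q : ℍ) : ℍ := ∑' n, q ^ n * c n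

/-- Cauchy product `(b ⋆ c)_n = Σ_{k=0}^n b_k c_{n-k}` of coefficient sequences,
i.e. the coefficient sequence of the slice `*`-product. -/
def cprod (b c : ℕ → ℍ) : ℕ → ℍ := fun n => ∑ k ∈ Finset.range (n + 1), b k * c (n - k)

/-- Coefficient sequence `ε(a)_n = √(1-|a|²) conj(a)^n` of the slice normalized
Szegő kernel `e_a`. -/
def eps (a : ℍ) : ℕ → ℍ := fun n => Real.sqrt (1 - ‖a‖ ^ 2) • (star a) ^ n

open scoped Classical in
/-- Coefficient sequence `β(a)` of the slice Blaschke factor `B_a`: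
`β(a)_0 = a²/|a|`, `β(a)_n = -conj(a)^{n-1}(1-|a|²)(a/|a|)` for `n ≥ 1`,
with the convention `β(0)_n = 1` iff `n = 1` (that is, `B_0(q) = q`). -/
def betaC (a : ℍ) : ℕ → ℍ :=
  if a = 0 then fun n => if n = 1 then 1 else 0
  else fun n =>
    if n = 0 then a ^ 2 / (‖a‖ : ℍ)
    else -((star a) ^ (n - 1) * ((1 - ‖a‖ ^ 2 : ℝ) : ℍ) * (a / (‖a‖ : ℍ)))

/-- The identity for the Cauchy product: coefficient sequence of the constant `1`. -/
def deltaSeq : ℕ → ℍ := fun n => if n = 0 then 1 else 0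

/-- Coefficient sequence of the Blaschke product `B_{a_0} * ⋯ * B_{a_{k-1}}`
(0-indexed; `Bprod a 0` is the empty product, i.e. the constant `1`). -/
def Bprod (a : ℕ → ℍ) : ℕ → (ℕ → ℍ)
  | 0 => deltaSeq
  | k + 1 => cprod (Bprod a k) (betaC (a k))

/-- Coefficient sequence of the `k`-th slice Takenaka–Malmquist function
`T_{k+1} = B_{a_0} * ⋯ * B_{a_{k-1}} * e_{a_k}` (0-indexed). -/
def tau (a : ℕ → ℍ) (k : ℕ) : ℕ → ℍ := cprod (Bprod a k) (eps (a k))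

/-- `e^{It} = cos t + I sin t`. -/
def expI (I : ℍ) (t : ℝ) : ℍ := ((Real.cos t : ℝ) : ℍ) + ((Real.sin t : ℝ) : ℍ) * I


open scoped RealInnerProductSpace

variable {I : ℍ}

lemma Ire (hI : I ^ 2 = -1) : I.re = 0 := by
  have h := hI
  rw [Quaternion.ext_iff] at h
  simp [pow_two, Quaternion.re_mul, Quaternion.imI_mul, Quaternion.imJ_mul, Quaternion.imK_mul, Quaternion.re_one, Quaternion.imI_one, Quaternion.imJ_one,
    Quaternion.imK_one] at h
  obtain ⟨h1, h2, h3, h4⟩ := h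
  nlinarith [sq_nonneg I.re, sq_nonneg I.imI, sq_nonneg I.imJ, sq_nonneg I.imK]

lemma starI (hI : I ^ 2 = -1) : star I = -I := by
  rw [Quaternion.star_eq_two_re_sub, Ire hI]
  simp

lemma re_mul_comm (a b : ℍ) : (a * b).re = (b * a).re := by
  simp [Quaternion.re_mul]; ring

lemma expI_eq (t : ℝ) : expI I t = Real.cos t • (1 : ℍ) + Real.sin t • I := by
  simp only [expI, Quaternion.coe_mul_eq_smul]
  rw [← Quaternion.coe_one, Quaternion.smul_coe, mul_one]

lemma expI_mul (hI : I ^ 2 = -1) (s t : ℝ) : expI I s * expI I t = expI I (s + t) := by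
  have hII : I * I = -1 := by rw [← pow_two, hI]
  simp only [expI_eq, add_mul, mul_add, smul_mul_assoc, mul_smul_comm, smul_smul, one_mul,
    mul_one, hII, smul_neg, Real.cos_add, Real.sin_add]
  module

lemma expI_zero : expI I 0 = 1 := by simp [expI]

lemma expI_pow (hI : I ^ 2 = -1) (t : ℝ) (n : ℕ) : (expI I t) ^ n = expI I (n * t) := by
  induction n with
  | zero => simp [expI_zero]
  | succ n ih =>
    rw [pow_succ, ih, expI_mul hI]
    congr 1; push_cast; ring

lemma norm_expI (hI : I ^ 2 = -1) (t : ℝ) : ‖expI I t‖ = 1 := by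
  have h1 : star (expI I t) = expI I (-t) := by
    simp only [expI_eq, Real.cos_neg, Real.sin_neg]
    rw [star_add, Quaternion.star_smul, Quaternion.star_smul, star_one, starI hI,
      smul_neg, neg_smul]
  have h2 : expI I t * star (expI I t) = 1 := by
    rw [h1, expI_mul hI, add_neg_cancel, expI_zero]
  have h3 := congrArg norm h2
  rw [norm_mul, norm_star, norm_one] at h3
  nlinarith [norm_nonneg (expI I t)]

lemma mul_expI_pow (hI : I ^ 2 = -1) (r t : ℝ) (n : ℕ) :
    ((r : ℍ) * expI I t) ^ n = ((r ^ n : ℝ) : ℍ) * expI I (n * t) := by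
  induction n with
  | zero => simp [expI_zero]
  | succ n ih =>
    rw [pow_succ, ih, mul_assoc,
      show expI I (↑n * t) * (↑r * expI I t) = (r : ℍ) * (expI I (↑n * t) * expI I t) from by
        rw [← mul_assoc, ← Quaternion.coe_commutes, mul_assoc],
      ← mul_assoc, ← Quaternion.coe_mul, expI_mul hI, ← pow_succ]
    congr 1; push_cast; ring

lemma inner_smulI_right (hI : I ^ 2 = -1) (a b : ℍ) : ⟪a, I * b⟫ = -⟪I * a, b⟫ := by
  rw [Quaternion.inner_def, Quaternion.inner_def, star_mul, starI hI]
  simp only [mul_neg, neg_mul, Quaternion.re_neg, ← mul_assoc]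
  rw [re_mul_comm (a * star b) I, ← mul_assoc]

lemma inner_smulI_both (hI : I ^ 2 = -1) (a b : ℍ) : ⟪I * a, I * b⟫ = ⟪a, b⟫ := by
  have hII : I * I = -1 := by rw [← pow_two, hI]
  rw [Quaternion.inner_def, Quaternion.inner_def, star_mul, starI hI]
  simp only [mul_neg, neg_mul, Quaternion.re_neg, ← mul_assoc]
  rw [re_mul_comm (I * a * star b) I, ← mul_assoc, ← mul_assoc, hII]
  simp

open intervalIntegral in
lemma integral_cos_int (k : ℤ) :
    ∫ t in (0:ℝ)..(2*Real.pi), Real.cos (k * t) = if k = 0 then 2*Real.pi else 0 := by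
  rcases eq_or_ne k 0 with hk | hk
  · simp [hk]
  · have h : ((k:ℝ)) ≠ 0 := Int.cast_ne_zero.2 hk
    rw [if_neg hk]
    have := intervalIntegral.integral_comp_mul_left (a := (0:ℝ)) (b := 2*Real.pi)
      (fun x => Real.cos x) h
    rw [this]
    simp only [mul_zero]
    rw [integral_cos]
    have h1 : Real.sin ((k:ℝ) * (2*Real.pi)) = 0 := by
      have := Real.sin_int_mul_pi (2*k)
      push_cast at this ⊢
      rw [show (k:ℝ) * (2*Real.pi) = 2*(k:ℝ)*Real.pi by ring]
      exact this
    simp [h1]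

open intervalIntegral in
lemma integral_sin_int (k : ℤ) :
    ∫ t in (0:ℝ)..(2*Real.pi), Real.sin (k * t) = 0 := by
  rcases eq_or_ne k 0 with hk | hk
  · simp [hk]
  · have h : ((k:ℝ)) ≠ 0 := Int.cast_ne_zero.2 hk
    have := intervalIntegral.integral_comp_mul_left (a := (0:ℝ)) (b := 2*Real.pi)
      (fun x => Real.sin x) h
    rw [this]
    simp only [mul_zero]
    rw [integral_sin]
    have h1 : Real.cos ((k:ℝ) * (2*Real.pi)) = 1 := by
      have := Real.cos_int_mul_two_pi k
      push_cast at this ⊢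
      exact this
    simp [h1]

lemma expI_mul_right (t : ℝ) (a : ℍ) :
    expI I t * a = Real.cos t • a + Real.sin t • (I * a) := by
  rw [expI_eq, add_mul, smul_mul_assoc, smul_mul_assoc, one_mul]

lemma inner_expI_expI (hI : I ^ 2 = -1) (s u : ℝ) (a b : ℍ) :
    ⟪expI I s * a, expI I u * b⟫ =
      Real.cos (s - u) * ⟪a, b⟫ + Real.sin (u - s) * ⟪a, I * b⟫ := by
  rw [expI_mul_right, expI_mul_right]
  simp only [inner_add_left, inner_add_right, real_inner_smul_left, real_inner_smul_right,
    inner_smulI_both hI, Real.cos_sub, Real.sin_sub]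
  have h := inner_smulI_right hI a b
  have h2 : ⟪I * a, b⟫ = -⟪a, I * b⟫ := by rw [h]; ring
  rw [h2]
  ring

open intervalIntegral in
lemma integral_inner_pair (hI : I ^ 2 = -1) (a b : ℍ) (n m : ℕ) :
    ∫ t in (0:ℝ)..(2*Real.pi), ⟪expI I (n*t) * a, expI I (m*t) * b⟫ =
      if n = m then 2*Real.pi * ⟪a, b⟫ else 0 := by
  set k1 : ℤ := (n:ℤ) - (m:ℤ) with hk1
  set k2 : ℤ := (m:ℤ) - (n:ℤ) with hk2
  have key : ∀ t : ℝ, ⟪expI I (n*t) * a, expI I (m*t) * b⟫ =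
      Real.cos ((k1:ℝ)*t) * ⟪a, b⟫ + Real.sin ((k2:ℝ)*t) * ⟪a, I * b⟫ := by
    intro t
    have e1 : (n:ℝ)*t - (m:ℝ)*t = (k1:ℝ)*t := by rw [hk1]; push_cast; ring
    have e2 : (m:ℝ)*t - (n:ℝ)*t = (k2:ℝ)*t := by rw [hk2]; push_cast; ring
    rw [inner_expI_expI hI, e1, e2]
  have i1 : IntervalIntegrable (fun t => Real.cos ((k1:ℝ)*t) * ⟪a, b⟫)
      MeasureTheory.volume 0 (2*Real.pi) := (Continuous.intervalIntegrable (by fun_prop) _ _)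
  have i2 : IntervalIntegrable (fun t => Real.sin ((k2:ℝ)*t) * ⟪a, I * b⟫)
      MeasureTheory.volume 0 (2*Real.pi) := (Continuous.intervalIntegrable (by fun_prop) _ _)
  rw [intervalIntegral.integral_congr (g := fun t => Real.cos ((k1:ℝ)*t) * ⟪a, b⟫ +
        Real.sin ((k2:ℝ)*t) * ⟪a, I * b⟫) (fun t _ => key t),
    intervalIntegral.integral_add i1 i2, intervalIntegral.integral_mul_const,
    intervalIntegral.integral_mul_const, integral_cos_int, integral_sin_int]
  rcases eq_or_ne n m with h | h
  · simp [h, hk1]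
  · have : k1 ≠ 0 := sub_ne_zero.2 (by exact_mod_cast h)
    simp [h, this]

lemma continuous_expI_comp (k : ℝ) : Continuous fun t : ℝ => expI I (k * t) := by
  unfold expI
  exact ((Quaternion.continuous_coe.comp (by fun_prop)).add
    ((Quaternion.continuous_coe.comp (by fun_prop)).mul continuous_const))

open MeasureTheory in
lemma part1 (c : ℕ → ℍ) (hc : Summable fun n => ‖c n‖ ^ 2) (hI : I ^ 2 = -1)
    (r : ℝ) (hr0 : 0 ≤ r) (hr1 : r < 1) :
    (2 * Real.pi)⁻¹ * ∫ t in (0:ℝ)..(2*Real.pi), ‖Fc c ((r:ℍ) * expI I t)‖ ^ 2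
      = ∑' n, r ^ (2*n) * ‖c n‖ ^ 2 := by
  -- a uniform bound on the coefficients
  obtain ⟨M, hM⟩ : ∃ M : ℝ, ∀ n, ‖c n‖ ≤ M := by
    have h0 : Filter.Tendsto (fun n => ‖c n‖ ^ 2) Filter.atTop (nhds 0) :=
      hc.tendsto_atTop_zero
    have h1 : Filter.Tendsto (fun n => ‖c n‖) Filter.atTop (nhds 0) := by
      have := h0.sqrt
      simpa [Real.sqrt_sq (norm_nonneg _)] using this
    obtain ⟨M, hM⟩ := h1.bddAbove_range
    exact ⟨M, fun n => hM (Set.mem_range_self n)⟩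
  have hM0 : 0 ≤ M := le_trans (norm_nonneg _) (hM 0)
  set x : ℕ → ℝ → ℍ := fun n t => (r ^ n) • (expI I ((n:ℝ)*t) * c n) with hx
  have hxnorm : ∀ n t, ‖x n t‖ ≤ r ^ n * M := by
    intro n t
    rw [hx]
    simp only [norm_smul, norm_mul, norm_expI hI, one_mul, Real.norm_eq_abs,
      abs_of_nonneg (pow_nonneg hr0 n)]
    exact mul_le_mul_of_nonneg_left (hM n) (pow_nonneg hr0 n)
  have hgeo : Summable fun n => r ^ n * M :=
    (summable_geometric_of_lt_one hr0 hr1).mul_right M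
  have hxsum : ∀ t, Summable fun n => x n t := fun t =>
    Summable.of_norm (hgeo.of_nonneg_of_le (fun n => norm_nonneg _) (fun n => hxnorm n t))
  have hFc : ∀ t, Fc c ((r:ℍ) * expI I t) = ∑' n, x n t := by
    intro t
    unfold Fc
    refine tsum_congr fun n => ?_
    rw [mul_expI_pow hI, mul_assoc, Quaternion.coe_mul_eq_smul]
  -- summability of the double inner-product series
  have hbsum : Summable fun p : ℕ × ℕ => (r ^ p.1 * M) * (r ^ p.2 * M) :=
    hgeo.mul_of_nonneg hgeo (fun n => mul_nonneg (pow_nonneg hr0 n) hM0)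
      (fun n => mul_nonneg (pow_nonneg hr0 n) hM0)
  have hgbound : ∀ (t : ℝ) (p : ℕ × ℕ),
      ‖⟪x p.1 t, x p.2 t⟫‖ ≤ (r ^ p.1 * M) * (r ^ p.2 * M) := by
    intro t p
    calc ‖⟪x p.1 t, x p.2 t⟫‖ ≤ ‖x p.1 t‖ * ‖x p.2 t‖ := norm_inner_le_norm _ _
    _ ≤ (r ^ p.1 * M) * (r ^ p.2 * M) :=
        mul_le_mul (hxnorm _ _) (hxnorm _ _) (norm_nonneg _)
          (mul_nonneg (pow_nonneg hr0 _) hM0)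
  have hgsum : ∀ t, Summable fun p : ℕ × ℕ => ⟪x p.1 t, x p.2 t⟫ := fun t =>
    hbsum.of_norm_bounded (hgbound t)
  -- pointwise expansion of the squared norm
  have hnormsq : ∀ t, ‖Fc c ((r:ℍ) * expI I t)‖ ^ 2 = ∑' p : ℕ × ℕ, ⟪x p.1 t, x p.2 t⟫ := by
    intro t
    rw [hFc t, ← real_inner_self_eq_norm_sq]
    set F := ∑' n, x n t with hF
    have hs : HasSum (fun n => x n t) F := (hxsum t).hasSum
    have h1 : ∀ n, HasSum (fun m => ⟪x n t, x m t⟫) ⟪x n t, F⟫ := fun n =>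
      hs.mapL (innerSL ℝ (x n t))
    have h2 : HasSum (fun n => ⟪x n t, F⟫) ⟪F, F⟫ := hs.mapL ((innerSL ℝ).flip F)
    rw [(hgsum t).tsum_prod' (fun n => (h1 n).summable)]
    have hmid : (∑' (n : ℕ), ∑' (m : ℕ), ⟪x n t, x m t⟫) = ∑' (n : ℕ), ⟪x n t, F⟫ :=
      tsum_congr fun n => (h1 n).tsum_eq
    rw [hmid]
    exact h2.tsum_eq.symm
  have h2pi : (0:ℝ) < 2 * Real.pi := by positivity
  -- continuity
  have hxc : ∀ n, Continuous fun t => x n t := by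
    intro n
    rw [hx]
    have := continuous_expI_comp (I := I) (n:ℝ)
    fun_prop
  have hcont : ∀ p : ℕ × ℕ, Continuous fun t => ⟪x p.1 t, x p.2 t⟫ := fun p =>
    (hxc p.1).inner (hxc p.2)
  -- swap integral and sum
  have hswap : ∫ t in (0:ℝ)..(2*Real.pi), ‖Fc c ((r:ℍ) * expI I t)‖ ^ 2
      = ∑' p : ℕ × ℕ, ∫ t in Set.Ioc (0:ℝ) (2*Real.pi), ⟪x p.1 t, x p.2 t⟫ := by
    rw [intervalIntegral.integral_of_le h2pi.le]
    rw [show (fun t => ‖Fc c ((r:ℍ) * expI I t)‖ ^ 2)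
        = fun t => ∑' p : ℕ × ℕ, ⟪x p.1 t, x p.2 t⟫ from funext hnormsq]
    refine (integral_tsum_of_summable_integral_norm (fun p => ?_) ?_).symm
    · exact (hcont p).integrableOn_Ioc
    · have hb : ∀ p : ℕ × ℕ,
          (∫ t in Set.Ioc (0:ℝ) (2*Real.pi), ‖⟪x p.1 t, x p.2 t⟫‖)
            ≤ (r ^ p.1 * M) * (r ^ p.2 * M) * (2*Real.pi) := by
        intro p
        have hle := norm_setIntegral_le_of_norm_le_const (μ := volume)
          (s := Set.Ioc (0:ℝ) (2*Real.pi)) (C := (r ^ p.1 * M) * (r ^ p.2 * M))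
          (f := fun t => ‖⟪x p.1 t, x p.2 t⟫‖)
          (by rw [Real.volume_Ioc]; exact ENNReal.ofReal_lt_top)
          (fun t _ => by simpa using hgbound t p)
        rw [Real.norm_of_nonneg (integral_nonneg (fun t => norm_nonneg _))] at hle
        rwa [Real.volume_real_Ioc_of_le (by linarith), sub_zero] at hle
      refine Summable.of_nonneg_of_le (fun p => integral_nonneg fun t => norm_nonneg _) hb ?_
      exact hbsum.mul_right _
  -- compute each integral
  have hint : ∀ p : ℕ × ℕ, (∫ t in Set.Ioc (0:ℝ) (2*Real.pi), ⟪x p.1 t, x p.2 t⟫)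
      = if p.1 = p.2 then 2*Real.pi * (r ^ (2*p.1) * ‖c p.1‖ ^ 2) else 0 := by
    rintro ⟨n, m⟩
    have e : ∀ t : ℝ, ⟪x n t, x m t⟫
        = (r ^ n * r ^ m) * ⟪expI I ((n:ℝ)*t) * c n, expI I ((m:ℝ)*t) * c m⟫ := by
      intro t
      rw [hx]
      simp only [real_inner_smul_left, real_inner_smul_right]
      ring
    rw [show (fun t => ⟪x n t, x m t⟫)
        = fun t => (r ^ n * r ^ m) * ⟪expI I ((n:ℝ)*t) * c n, expI I ((m:ℝ)*t) * c m⟫ from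
      funext e]
    rw [MeasureTheory.integral_const_mul, ← intervalIntegral.integral_of_le h2pi.le,
      integral_inner_pair hI]
    rcases eq_or_ne n m with h | h
    · subst h
      rw [if_pos rfl, if_pos rfl, real_inner_self_eq_norm_sq, pow_mul]
      ring
    · simp [h]
  rw [hswap]
  rw [show (fun p : ℕ × ℕ => ∫ t in Set.Ioc (0:ℝ) (2*Real.pi), ⟪x p.1 t, x p.2 t⟫)
      = fun p : ℕ × ℕ => if p.1 = p.2 then 2*Real.pi * (r ^ (2*p.1) * ‖c p.1‖ ^ 2) else 0 from
    funext hint]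
  -- collapse to the diagonal
  have hdiagsum : Summable (fun p : ℕ × ℕ =>
      if p.1 = p.2 then 2*Real.pi * (r ^ (2*p.1) * ‖c p.1‖ ^ 2) else 0) := by
    rw [show (fun p : ℕ × ℕ => if p.1 = p.2 then 2*Real.pi * (r ^ (2*p.1) * ‖c p.1‖ ^ 2) else 0)
        = fun p : ℕ × ℕ => ∫ t in Set.Ioc (0:ℝ) (2*Real.pi), ⟪x p.1 t, x p.2 t⟫ from
      (funext hint).symm]
    refine Summable.of_norm ?_
    refine Summable.of_nonneg_of_le (fun p => norm_nonneg _) (fun p => ?_) (hbsum.mul_right (2*Real.pi))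
    have hle := norm_setIntegral_le_of_norm_le_const (μ := volume)
      (s := Set.Ioc (0:ℝ) (2*Real.pi)) (C := (r ^ p.1 * M) * (r ^ p.2 * M))
      (f := fun t => ⟪x p.1 t, x p.2 t⟫)
      (by rw [Real.volume_Ioc]; exact ENNReal.ofReal_lt_top)
      (fun t _ => hgbound t p)
    rwa [Real.volume_real_Ioc_of_le (by linarith [Real.pi_pos]), sub_zero] at hle
  have hdiag : (∑' p : ℕ × ℕ, if p.1 = p.2 then 2*Real.pi * (r ^ (2*p.1) * ‖c p.1‖ ^ 2) else 0)
      = ∑' n : ℕ, 2*Real.pi * (r ^ (2*n) * ‖c n‖ ^ 2) := by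
    rw [hdiagsum.tsum_prod' (fun n =>
      summable_of_ne_finset_zero (s := {n})
        (fun m hm => if_neg (by simp at hm ⊢; exact fun h => hm h.symm)))]
    refine tsum_congr fun n => ?_
    rw [tsum_eq_single n (fun m hm => if_neg (fun h => hm (h.symm)))]
    simp
  rw [hdiag, tsum_mul_left, ← mul_assoc, inv_mul_cancel₀ (ne_of_gt h2pi), one_mul]


/-- the norm identity for the slice Hardy space `H²(𝔹_I)`. -/
theorem hardy_norm_identity (c : ℕ → ℍ) (hc : Summable fun n => ‖c n‖ ^ 2)
    (I : ℍ) (hI : I ^ 2 = -1) :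
    (∀ r : ℝ, 0 ≤ r → r < 1 →
      (2 * Real.pi)⁻¹ * ∫ t in (0 : ℝ)..(2 * Real.pi), ‖Fc c ((r : ℍ) * expI I t)‖ ^ 2
        = ∑' n, r ^ (2 * n) * ‖c n‖ ^ 2) ∧
    sSup ((fun r : ℝ =>
        (2 * Real.pi)⁻¹ * ∫ t in (0 : ℝ)..(2 * Real.pi), ‖Fc c ((r : ℍ) * expI I t)‖ ^ 2) ''
          Set.Ico (0 : ℝ) 1)
      = ∑' n, ‖c n‖ ^ 2 := by
  have hpart1 : ∀ r : ℝ, 0 ≤ r → r < 1 →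
      (2 * Real.pi)⁻¹ * ∫ t in (0 : ℝ)..(2 * Real.pi), ‖Fc c ((r : ℍ) * expI I t)‖ ^ 2
        = ∑' n, r ^ (2 * n) * ‖c n‖ ^ 2 := fun r hr0 hr1 => part1 c hc hI r hr0 hr1
  refine ⟨hpart1, ?_⟩
  set f : ℝ → ℝ := fun r =>
    (2 * Real.pi)⁻¹ * ∫ t in (0 : ℝ)..(2 * Real.pi), ‖Fc c ((r : ℍ) * expI I t)‖ ^ 2 with hf
  have hsum_r : ∀ r : ℝ, 0 ≤ r → r < 1 → Summable fun n => r ^ (2*n) * ‖c n‖ ^ 2 := by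
    intro r hr0 hr1
    refine hc.of_nonneg_of_le (fun n => by positivity) (fun n => ?_)
    have h1 : r ^ (2*n) ≤ 1 := pow_le_one₀ hr0 hr1.le
    have := sq_nonneg ‖c n‖
    nlinarith
  apply csSup_eq_of_forall_le_of_forall_lt_exists_gt
  · exact ⟨f 0, ⟨0, ⟨le_refl 0, zero_lt_one⟩, rfl⟩⟩
  · rintro a ⟨r, ⟨hr0, hr1⟩, rfl⟩
    have heq : f r = ∑' n, r ^ (2*n) * ‖c n‖ ^ 2 := hpart1 r hr0 hr1
    rw [heq]
    refine (hsum_r r hr0 hr1).tsum_le_tsum (fun n => ?_) hc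
    have h1 : r ^ (2*n) ≤ 1 := pow_le_one₀ hr0 hr1.le
    have := sq_nonneg ‖c n‖
    nlinarith
  · intro w hw
    have hS : HasSum (fun n => ‖c n‖ ^ 2) (∑' n, ‖c n‖ ^ 2) := hc.hasSum
    have hev : ∀ᶠ s in Filter.atTop, w < ∑ n ∈ s, ‖c n‖ ^ 2 :=
      hS.eventually (eventually_gt_nhds hw)
    obtain ⟨s, hs⟩ := hev.exists
    set rr : ℕ → ℝ := fun k => 1 - 1/(k+1) with hrr
    have hrr0 : ∀ k, 0 ≤ rr k := by
      intro k; rw [hrr]; simp only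
      have h1 : 1/((k:ℝ)+1) ≤ 1 := by
        rw [div_le_one (by positivity)]
        linarith [Nat.cast_nonneg (α := ℝ) k]
      linarith
    have hrr1 : ∀ k, rr k < 1 := by
      intro k; rw [hrr]; simp only
      have : 0 < 1/((k:ℝ)+1) := by positivity
      linarith
    have hlim : Filter.Tendsto rr Filter.atTop (nhds 1) := by
      rw [hrr]
      have h0 : Filter.Tendsto (fun k : ℕ => 1/((k:ℝ)+1)) Filter.atTop (nhds 0) :=
        tendsto_one_div_add_atTop_nhds_zero_nat
      simpa using tendsto_const_nhds.sub h0
    set h : ℝ → ℝ := fun r => ∑ n ∈ s, r ^ (2*n) * ‖c n‖ ^ 2 with hh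
    have hcont : Continuous h := by
      rw [hh]; continuity
    have hh1 : h 1 = ∑ n ∈ s, ‖c n‖ ^ 2 := by simp [hh]
    have hlim2 : Filter.Tendsto (fun k => h (rr k)) Filter.atTop (nhds (h 1)) :=
      (hcont.tendsto 1).comp hlim
    have hev2 : ∀ᶠ k in Filter.atTop, w < h (rr k) :=
      hlim2.eventually (eventually_gt_nhds (by rw [hh1]; exact hs))
    obtain ⟨k, hk⟩ := hev2.exists
    refine ⟨f (rr k), ⟨rr k, ⟨hrr0 k, hrr1 k⟩, rfl⟩, ?_⟩
    have heq : f (rr k) = ∑' n, (rr k) ^ (2*n) * ‖c n‖ ^ 2 := hpart1 _ (hrr0 k) (hrr1 k)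
    rw [heq]
    refine lt_of_lt_of_le hk ?_
    rw [hh]
    exact (hsum_r _ (hrr0 k) (hrr1 k)).sum_le_tsum s (fun n _ => mul_nonneg (pow_nonneg (hrr0 k) _) (sq_nonneg _))
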